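/- Fix T ⊆ [n] with n ∈ T. The number of signed permutations (ω,ε) of [n] with ω(1) ∈ T and all right-to-left maxima unbarred is (2|T|−1)·1·3⋯(2n−3), and the number of signed permutations in D_n with ω(1) ∉ T ∪ {n} and all right-to-left maxima unbarred is (n−|T|)·1·3⋯(2n−3). -/

import Mathlib

open Finset

namespace SignedAux

variable {n : ℕ}

def rtl (ω : Equiv.Perm (Fin n)) : Finset (Fin n) :=
  univ.filter (fun i => ∀ j, i < j → ω j < ω i)

lemma mem_rtl {ω : Equiv.Perm (Fin n)} {i : Fin n} :
    i ∈ rtl ω ↔ ∀ j, i < j → ω j < ω i := by simp [rtl]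

def F (q : Fin (n+1)) (e : Equiv.Perm (Fin n)) : Equiv.Perm (Fin (n+1)) :=
  ((finSuccEquiv' q).trans (e.optionCongr)).trans (finSuccEquiv' 0).symm

lemma F_apply_self (q : Fin (n+1)) (e : Equiv.Perm (Fin n)) : F q e q = 0 := by
  simp [F, finSuccEquiv'_at, finSuccEquiv'_symm_none]

lemma F_apply_succAbove (q : Fin (n+1)) (e : Equiv.Perm (Fin n)) (i : Fin n) :
    F q e (q.succAbove i) = (e i).succ := by
  simp [F, finSuccEquiv'_succAbove, finSuccEquiv'_symm_some, Fin.zero_succAbove]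

lemma F_injective :
    Function.Injective (fun p : Fin (n+1) × Equiv.Perm (Fin n) => F p.1 p.2) := by
  rintro ⟨q, e⟩ ⟨q', e'⟩ h
  simp only at h
  have hq : q = q' := by
    have h1 : F q' e' q = 0 := by rw [← h]; exact F_apply_self q e
    have h2 : F q' e' q' = 0 := F_apply_self q' e'
    exact (F q' e').injective (h1.trans h2.symm)
  subst hq
  have he : e = e' := by
    ext i
    have := congrArg (fun σ : Equiv.Perm (Fin (n+1)) => σ (q.succAbove i)) h
    simp only [F_apply_succAbove] at this
    exact congrArg Fin.val (Fin.succ_injective _ this)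
  simp [he]

noncomputable def FEquiv (n : ℕ) : Fin (n+1) × Equiv.Perm (Fin n) ≃ Equiv.Perm (Fin (n+1)) :=
  Equiv.ofBijective (fun p : Fin (n+1) × Equiv.Perm (Fin n) => F p.1 p.2)
    ((Fintype.bijective_iff_injective_and_card _).mpr
      ⟨F_injective, by simp [Fintype.card_perm, Nat.factorial_succ, mul_comm]⟩)

lemma FEquiv_apply (p : Fin (n+1) × Equiv.Perm (Fin n)) : FEquiv n p = F p.1 p.2 := rfl

lemma q_mem_rtl_iff (q : Fin (n+1)) (e : Equiv.Perm (Fin n)) :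
    q ∈ rtl (F q e) ↔ q = Fin.last n := by
  rw [mem_rtl]
  constructor
  · intro h
    by_contra hq
    have hlt : q < Fin.last n := lt_of_le_of_ne (Fin.le_last q) hq
    have h2 := h (Fin.last n) hlt
    rw [F_apply_self] at h2
    exact absurd h2 (Fin.not_lt_zero _)
  · intro h j hj
    exact absurd hj ((show j ≤ q from h ▸ Fin.le_last j).not_gt)

lemma succAbove_mem_rtl_iff (q : Fin (n+1)) (e : Equiv.Perm (Fin n)) (i : Fin n) :
    q.succAbove i ∈ rtl (F q e) ↔ i ∈ rtl e := by
  rw [mem_rtl, mem_rtl]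
  constructor
  · intro h j hj
    have h2 := h (q.succAbove j) (by rwa [Fin.succAbove_lt_succAbove_iff])
    rw [F_apply_succAbove, F_apply_succAbove] at h2
    exact Fin.succ_lt_succ_iff.mp h2
  · intro h j hj
    rcases eq_or_ne j q with rfl | hjq
    · rw [F_apply_self, F_apply_succAbove]
      exact Fin.succ_pos _
    · obtain ⟨j', rfl⟩ := Fin.exists_succAbove_eq hjq
      rw [F_apply_succAbove, F_apply_succAbove, Fin.succ_lt_succ_iff]
      exact h j' (Fin.succAbove_lt_succAbove_iff.mp hj)

lemma card_eq_sum_indicator {α : Type*} [Fintype α] [DecidableEq α] (s : Finset α) :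
    s.card = ∑ i, if i ∈ s then 1 else 0 := by
  simp [Finset.sum_ite_mem]

lemma card_rtl_F (q : Fin (n+1)) (e : Equiv.Perm (Fin n)) :
    (rtl (F q e)).card = (if q = Fin.last n then 1 else 0) + (rtl e).card := by
  rw [card_eq_sum_indicator (rtl (F q e)), Fin.sum_univ_succAbove _ q]
  simp only [q_mem_rtl_iff, succAbove_mem_rtl_iff]
  rw [← card_eq_sum_indicator]

lemma card_rtl_le (ω : Equiv.Perm (Fin n)) : (rtl ω).card ≤ n := by
  have : (rtl ω).card ≤ (univ : Finset (Fin n)).card := Finset.card_le_card (Finset.subset_univ _)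
  simpa using this

lemma F_zero_of_ne {n : ℕ} (q : Fin (n+2)) (e : Equiv.Perm (Fin (n+1))) (hq : q ≠ 0) :
    F q e 0 = (e 0).succ := by
  have h0 : q.succAbove 0 = 0 := by
    rw [Fin.succAbove_of_castSucc_lt]
    · rfl
    · simpa [Fin.pos_iff_ne_zero] using hq
  conv_lhs => rw [← h0]
  exact F_apply_succAbove q e 0

lemma sum_ite_last (n : ℕ) (a b : ℕ) :
    (∑ v : Fin (n+1), if v = Fin.last n then a else b) = n * b + a := by
  rw [Fin.sum_univ_castSucc]
  have h : ∀ i : Fin n, ¬ (Fin.castSucc i = Fin.last n) := fun i => (Fin.castSucc_lt_last i).ne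
  simp [h, mul_comm]

lemma sumG (n : ℕ) : ∀ (v : Fin (n+1)),
    (∑ ω ∈ univ.filter (fun ω : Equiv.Perm (Fin (n+1)) => ω 0 = v), 2 ^ (n + 1 - (rtl ω).card))
      = (if v = Fin.last n then 1 else 2) * ∏ k ∈ Finset.range n, (2 * k + 1) := by
  induction n with
  | zero =>
    intro v
    have hv : v = Fin.last 0 := Fin.ext (by omega)
    subst hv
    decide
  | succ n ih =>
    have htot : (∑ e : Equiv.Perm (Fin (n+1)), 2 ^ (n + 1 - (rtl e).card))
        = ∏ k ∈ Finset.range (n+1), (2*k+1) := by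
      rw [← Finset.sum_fiberwise univ (fun e : Equiv.Perm (Fin (n+1)) => e 0)
        (fun e => 2 ^ (n+1 - (rtl e).card))]
      calc (∑ v : Fin (n+1), ∑ e ∈ univ.filter (fun e : Equiv.Perm (Fin (n+1)) => e 0 = v),
              2 ^ (n+1 - (rtl e).card))
          = ∑ v : Fin (n+1), (if v = Fin.last n then 1 else 2) * ∏ k ∈ Finset.range n, (2*k+1) :=
            Finset.sum_congr rfl (fun v _ => ih v)
        _ = _ := by
            rw [← Finset.sum_mul, sum_ite_last, Finset.prod_range_succ]; ring
    intro v
    rw [Finset.sum_filter, ← Equiv.sum_comp (FEquiv (n+1))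
      (fun ω => if ω 0 = v then 2 ^ (n + 1 + 1 - (rtl ω).card) else 0)]
    simp only [FEquiv_apply]
    rw [Fintype.sum_prod_type]
    rw [Fin.sum_univ_succ]
    by_cases hv : v = 0
    · subst hv
      have h1 : (∑ e : Equiv.Perm (Fin (n+1)),
            if F 0 e 0 = 0 then 2 ^ (n + 1 + 1 - (rtl (F 0 e)).card) else 0)
          = 2 * ∏ k ∈ Finset.range (n+1), (2*k+1) := by
        rw [← htot, Finset.mul_sum]
        refine Finset.sum_congr rfl (fun e _ => ?_)
        rw [if_pos (F_apply_self 0 e), card_rtl_F]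
        have hne : (0 : Fin (n+2)) ≠ Fin.last (n+1) := by
          simp [Fin.ext_iff]
        rw [if_neg hne]
        have hc : (rtl e).card ≤ n + 1 := card_rtl_le e
        have : n + 1 + 1 - (0 + (rtl e).card) = (n + 1 - (rtl e).card) + 1 := by omega
        rw [this, pow_succ]
        ring
      have h2 : (∑ i : Fin (n+1), ∑ e : Equiv.Perm (Fin (n+1)),
            if F i.succ e 0 = 0 then 2 ^ (n + 1 + 1 - (rtl (F i.succ e)).card) else 0) = 0 := by
        refine Finset.sum_eq_zero (fun i _ => Finset.sum_eq_zero (fun e _ => ?_))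
        rw [F_zero_of_ne _ _ (Fin.succ_ne_zero i), if_neg (Fin.succ_ne_zero (e 0))]
      erw [h1, h2, add_zero]
      have hne : (0 : Fin (n+2)) ≠ Fin.last (n+1) := by simp [Fin.ext_iff]
      rw [if_neg hne]
    · have h1 : (∑ e : Equiv.Perm (Fin (n+1)),
            if F 0 e 0 = v then 2 ^ (n + 1 + 1 - (rtl (F 0 e)).card) else 0) = 0 := by
        refine Finset.sum_eq_zero (fun e _ => ?_)
        rw [F_apply_self, if_neg (fun h => hv h.symm)]
      set w := v.pred hv with hw
      have hvw : w.succ = v := Fin.succ_pred v hv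
      have hG : (∑ e ∈ univ.filter (fun e : Equiv.Perm (Fin (n+1)) => e 0 = w),
          2 ^ (n + 1 - (rtl e).card))
          = (if w = Fin.last n then 1 else 2) * ∏ k ∈ Finset.range n, (2*k+1) := ih w
      have h2 : ∀ i : Fin (n+1), (∑ e : Equiv.Perm (Fin (n+1)),
            if F i.succ e 0 = v then 2 ^ (n + 1 + 1 - (rtl (F i.succ e)).card) else 0)
          = (if i = Fin.last n then 1 else 2) *
            ((if w = Fin.last n then 1 else 2) * ∏ k ∈ Finset.range n, (2*k+1)) := by
        intro i
        rw [← hG, Finset.sum_filter, Finset.mul_sum]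
        refine Finset.sum_congr rfl (fun e _ => ?_)
        have hcond : (F i.succ e 0 = v) ↔ (e 0 = w) := by
          rw [F_zero_of_ne _ _ (Fin.succ_ne_zero i), ← hvw, Fin.succ_inj]
        have hsucc : (i.succ = Fin.last (n+1)) ↔ (i = Fin.last n) := by
          rw [← Fin.succ_last, Fin.succ_inj]
        by_cases he : e 0 = w
        · rw [if_pos (hcond.mpr he), if_pos he, card_rtl_F]
          by_cases hi : i = Fin.last n
          · rw [if_pos (hsucc.mpr hi), if_pos hi]
            have h3 : n + 1 + 1 - (1 + (rtl e).card) = n + 1 - (rtl e).card := by omega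
            rw [h3, one_mul]
          · rw [if_neg (fun h => hi (hsucc.mp h)), if_neg hi]
            have hc : (rtl e).card ≤ n + 1 := card_rtl_le e
            have h3 : n + 1 + 1 - (0 + (rtl e).card) = (n + 1 - (rtl e).card) + 1 := by omega
            rw [h3, pow_succ]
            ring
        · rw [if_neg (fun h => he (hcond.mp h)), if_neg he, mul_zero]
      erw [h1, zero_add]
      calc (∑ i : Fin (n+1), ∑ e : Equiv.Perm (Fin (n+1)),
            if F i.succ e 0 = v then 2 ^ (n + 1 + 1 - (rtl (F i.succ e)).card) else 0)
          = ∑ i : Fin (n+1), (if i = Fin.last n then 1 else 2) *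
            ((if w = Fin.last n then 1 else 2) * ∏ k ∈ Finset.range n, (2*k+1)) :=
            Finset.sum_congr rfl (fun i _ => h2 i)
        _ = (n * 2 + 1) * ((if w = Fin.last n then 1 else 2) * ∏ k ∈ Finset.range n, (2*k+1)) := by
            rw [← Finset.sum_mul, sum_ite_last]
        _ = (if v = Fin.last (n+1) then 1 else 2) * ∏ k ∈ Finset.range (n+1), (2*k+1) := by
            have hlast : (v = Fin.last (n+1)) ↔ (w = Fin.last n) := by
              rw [← hvw, ← Fin.succ_last, Fin.succ_inj]
            rw [Finset.prod_range_succ]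
            by_cases hw' : w = Fin.last n
            · rw [if_pos hw', if_pos (hlast.mpr hw')]; ring
            · rw [if_neg hw', if_neg (fun h => hw' (hlast.mp h))]; ring

lemma card_units_two : (univ : Finset ℤˣ).card = 2 := by decide

lemma epsCardA (S : Finset (Fin n)) :
    (univ.filter (fun ε : Fin n → ℤˣ => ∀ i ∈ S, ε i = 1)).card = 2 ^ (n - S.card) := by
  have hset : (univ.filter (fun ε : Fin n → ℤˣ => ∀ i ∈ S, ε i = 1))
      = Fintype.piFinset (fun i => if i ∈ S then ({1} : Finset ℤˣ) else univ) := by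
    ext ε
    simp only [mem_filter, mem_univ, true_and, Fintype.mem_piFinset]
    constructor
    · intro h i
      by_cases hi : i ∈ S
      · simp [hi, h i hi]
      · simp [hi]
        exact Int.units_eq_one_or _
    · intro h i hi
      have h2 := h i
      simpa [hi] using h2
  rw [hset, Fintype.card_piFinset]
  have hcard : ∀ i : Fin n,
      (if i ∈ S then ({1} : Finset ℤˣ) else univ).card = if i ∈ S then 1 else 2 := by
    intro i
    by_cases hi : i ∈ S <;> simp [hi, card_units_two]
  rw [Finset.prod_congr rfl (fun i _ => hcard i), Finset.prod_ite,
    Finset.prod_const, Finset.prod_const, one_pow, one_mul]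
  congr 1
  have : (univ.filter (fun i : Fin n => ¬ i ∈ S)) = Sᶜ := by
    ext i; simp
  rw [this, Finset.card_compl, Fintype.card_fin]

lemma epsCardB (S : Finset (Fin n)) (i₀ : Fin n) (hi₀ : i₀ ∉ S) :
    (univ.filter (fun ε : Fin n → ℤˣ => (∏ i, ε i) = 1 ∧ ∀ i ∈ S, ε i = 1)).card
      = 2 ^ (n - 1 - S.card) := by
  classical
  set A := univ.filter (fun ε : Fin n → ℤˣ => (∏ i, ε i) = 1 ∧ ∀ i ∈ S, ε i = 1) with hA
  set B := univ.filter (fun ε : Fin n → ℤˣ => (∏ i, ε i) = -1 ∧ ∀ i ∈ S, ε i = 1) with hB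
  have hflip : ∀ ε : Fin n → ℤˣ,
      (∏ i, Function.update ε i₀ (-(ε i₀)) i) = - ∏ i, ε i := by
    intro ε
    rw [Finset.prod_update_of_mem (Finset.mem_univ i₀),
      ← Finset.mul_prod_erase univ ε (Finset.mem_univ i₀), neg_mul, Finset.erase_eq]
  have hfix : ∀ (ε : Fin n → ℤˣ), (∀ i ∈ S, ε i = 1) →
      ∀ i ∈ S, Function.update ε i₀ (-(ε i₀)) i = 1 := by
    intro ε h i hi
    rw [Function.update_of_ne (fun h' : i = i₀ => hi₀ (h' ▸ hi)) _ _]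
    exact h i hi
  have hinv : ∀ ε : Fin n → ℤˣ,
      Function.update (Function.update ε i₀ (-(ε i₀))) i₀
        (-(Function.update ε i₀ (-(ε i₀)) i₀)) = ε := by
    intro ε
    rw [Function.update_self, Function.update_idem, neg_neg, Function.update_eq_self]
  have hAB : A.card = B.card := by
    refine Finset.card_bij' (fun ε _ => Function.update ε i₀ (-(ε i₀)))
      (fun ε _ => Function.update ε i₀ (-(ε i₀))) ?_ ?_ ?_ ?_
    · intro ε hε
      rw [hA, Finset.mem_filter] at hε
      rw [hB, Finset.mem_filter]
      exact ⟨Finset.mem_univ _, by rw [hflip, hε.2.1], hfix ε hε.2.2⟩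
    · intro ε hε
      rw [hB, Finset.mem_filter] at hε
      rw [hA, Finset.mem_filter]
      exact ⟨Finset.mem_univ _, by rw [hflip, hε.2.1, neg_neg], hfix ε hε.2.2⟩
    · intro ε _; exact hinv ε
    · intro ε _; exact hinv ε
  have hunion : A ∪ B = univ.filter (fun ε : Fin n → ℤˣ => ∀ i ∈ S, ε i = 1) := by
    ext ε
    rw [Finset.mem_union, hA, hB]
    simp only [Finset.mem_filter, Finset.mem_univ, true_and]
    constructor
    · rintro (⟨_, h⟩ | ⟨_, h⟩) <;> exact h
    · intro h
      rcases Int.units_eq_one_or (∏ i, ε i) with hp | hp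
      · exact Or.inl ⟨hp, h⟩
      · exact Or.inr ⟨hp, h⟩
  have hdisj : Disjoint A B := by
    rw [Finset.disjoint_left]
    intro ε hε hε'
    rw [hA, Finset.mem_filter] at hε
    rw [hB, Finset.mem_filter] at hε'
    have : (1 : ℤˣ) = -1 := hε.2.1 ▸ hε'.2.1
    exact absurd this (by decide)
  have hcard : A.card + B.card = 2 ^ (n - S.card) := by
    rw [← Finset.card_union_of_disjoint hdisj, hunion, epsCardA]
  have hS : S.card ≤ n - 1 := by
    have hsub : S ⊆ univ.erase i₀ := fun i hi =>
      Finset.mem_erase.mpr ⟨fun h => hi₀ (h ▸ hi), Finset.mem_univ i⟩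
    have := Finset.card_le_card hsub
    simpa using this
  have hn1 : 0 < n := i₀.pos
  have hpow : 2 ^ (n - S.card) = 2 * 2 ^ (n - 1 - S.card) := by
    have h3 : n - S.card = (n - 1 - S.card) + 1 := by omega
    rw [h3, pow_succ]; ring
  have h2 : 2 * A.card = 2 * 2 ^ (n - 1 - S.card) := by
    calc 2 * A.card = A.card + B.card := by rw [two_mul, hAB]
      _ = 2 ^ (n - S.card) := hcard
      _ = 2 * 2 ^ (n - 1 - S.card) := hpow
  exact Nat.eq_of_mul_eq_mul_left (by norm_num) h2

lemma card_filter_prod {α β : Type*} [Fintype α] [Fintype β]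
    (P : α → Prop) (Q : α → β → Prop) [DecidablePred P] [∀ a, DecidablePred (Q a)] :
    (univ.filter (fun p : α × β => P p.1 ∧ Q p.1 p.2)).card
      = ∑ a ∈ univ.filter P, (univ.filter (Q a)).card := by
  rw [Finset.card_filter, Fintype.sum_prod_type, Finset.sum_filter]
  refine Finset.sum_congr rfl (fun a _ => ?_)
  by_cases h : P a
  · rw [if_pos h, Finset.card_filter]
    exact Finset.sum_congr rfl (fun b _ => by simp [h])
  · rw [if_neg h]
    exact Finset.sum_eq_zero (fun b _ => by simp [h])

lemma zero_not_mem_rtl {m : ℕ} {ω : Equiv.Perm (Fin (m+1))} (h : ω 0 ≠ Fin.last m) :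
    (0 : Fin (m+1)) ∉ rtl ω := by
  rw [mem_rtl]
  intro hmem
  apply h
  rcases eq_or_ne (ω.symm (Fin.last m)) 0 with hj | hj
  · rw [← hj, Equiv.apply_symm_apply]
  · have hpos : 0 < ω.symm (Fin.last m) := Fin.pos_of_ne_zero hj
    have h2 := hmem _ hpos
    rw [Equiv.apply_symm_apply] at h2
    exact absurd h2 (show ω 0 ≤ Fin.last m from Fin.le_last (ω 0)).not_gt

lemma mk0 {m : ℕ} (h : 0 < m + 1) : (⟨0, h⟩ : Fin (m + 1)) = 0 := rfl

lemma mk_last {m : ℕ} (h : m + 1 - 1 < m + 1) : (⟨m + 1 - 1, h⟩ : Fin (m + 1)) = Fin.last m := by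
  apply Fin.ext; simp

end SignedAux

open SignedAux in
/-- Fix `T ⊆ [n]` with `n ∈ T`.  The number of signed permutations `(ω,ε)` of `[n]`
with `ω(1) ∈ T` and all right-to-left maxima unbarred is `(2|T|-1)·1·3⋯(2n-3)`,
and the number of even-signed permutations (`∏εᵢ = 1`, i.e. in `D_n`) with
`ω(1) ∉ T ∪ {n}` and all right-to-left maxima unbarred is `(n-|T|)·1·3⋯(2n-3)`. -/
theorem card_interpolating_mem_T {n : ℕ} (hn : 2 ≤ n)
    (T : Finset (Fin n)) (hT : (⟨n - 1, by omega⟩ : Fin n) ∈ T) :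
    ((Finset.univ : Finset (Equiv.Perm (Fin n) × (Fin n → ℤˣ))).filter
        (fun p => p.1 ⟨0, by omega⟩ ∈ T ∧
          ∀ i : Fin n, (∀ j : Fin n, i < j → p.1 j < p.1 i) → p.2 i = 1)).card
      = (2 * T.card - 1) * ∏ k ∈ Finset.range (n - 1), (2 * k + 1) ∧
    ((Finset.univ : Finset (Equiv.Perm (Fin n) × (Fin n → ℤˣ))).filter
        (fun p => (∏ i, p.2 i) = 1 ∧
          p.1 ⟨0, by omega⟩ ∉ T ∧ p.1 ⟨0, by omega⟩ ≠ ⟨n - 1, by omega⟩ ∧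
          ∀ i : Fin n, (∀ j : Fin n, i < j → p.1 j < p.1 i) → p.2 i = 1)).card
      = (n - T.card) * ∏ k ∈ Finset.range (n - 1), (2 * k + 1) := by
  obtain ⟨m, rfl⟩ : ∃ m, n = m + 1 := ⟨n - 1, by omega⟩
  simp only [SignedAux.mk0, SignedAux.mk_last, Nat.add_sub_cancel] at hT ⊢
  have hTlast : Fin.last m ∈ T := hT
  -- grouping by the value at position 0
  have grp : ∀ (U : Finset (Fin (m+1))) (f : Equiv.Perm (Fin (m+1)) → ℕ),
      (∑ ω ∈ univ.filter (fun ω : Equiv.Perm (Fin (m+1)) => ω 0 ∈ U), f ω)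
        = ∑ v ∈ U, ∑ ω ∈ univ.filter (fun ω : Equiv.Perm (Fin (m+1)) => ω 0 = v), f ω := by
    intro U f
    rw [← Finset.sum_fiberwise_of_maps_to (g := fun ω : Equiv.Perm (Fin (m+1)) => ω 0)
        (t := U) (fun ω hω => (Finset.mem_filter.mp hω).2) f]
    refine Finset.sum_congr rfl (fun v hv => ?_)
    congr 1
    rw [Finset.filter_filter]
    ext ω
    simp only [Finset.mem_filter, Finset.mem_univ, true_and]
    exact ⟨fun h => h.2, fun h => ⟨by rw [h]; exact hv, h⟩⟩
  constructor
  · have inner1 : ∀ ω : Equiv.Perm (Fin (m+1)),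
        (univ.filter (fun ε : Fin (m+1) → ℤˣ =>
            ∀ i, (∀ j, i < j → ω j < ω i) → ε i = 1)).card
          = 2 ^ (m + 1 - (rtl ω).card) := by
      intro ω
      have hset : univ.filter (fun ε : Fin (m+1) → ℤˣ =>
            ∀ i, (∀ j, i < j → ω j < ω i) → ε i = 1)
          = univ.filter (fun ε : Fin (m+1) → ℤˣ => ∀ i ∈ rtl ω, ε i = 1) := by
        ext ε
        simp only [Finset.mem_filter, Finset.mem_univ, true_and, mem_rtl]
      rw [hset]
      exact epsCardA _
    have hsumT : (∑ v ∈ T, if v = Fin.last m then 1 else 2) = 2 * T.card - 1 := by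
      rw [← Finset.sum_erase_add T _ hTlast, if_pos rfl]
      have hrest : ∀ v ∈ T.erase (Fin.last m), (if v = Fin.last m then 1 else 2) = 2 :=
        fun v hv => if_neg (Finset.mem_erase.mp hv).1
      rw [Finset.sum_congr rfl hrest, Finset.sum_const, Finset.card_erase_of_mem hTlast,
        smul_eq_mul]
      have hT1 : 1 ≤ T.card := Finset.card_pos.mpr ⟨_, hTlast⟩
      omega
    calc ((Finset.univ : Finset (Equiv.Perm (Fin (m+1)) × (Fin (m+1) → ℤˣ))).filter
        (fun p => p.1 0 ∈ T ∧
          ∀ i, (∀ j, i < j → p.1 j < p.1 i) → p.2 i = 1)).card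
        = ∑ ω ∈ univ.filter (fun ω : Equiv.Perm (Fin (m+1)) => ω 0 ∈ T),
            (univ.filter (fun ε : Fin (m+1) → ℤˣ =>
              ∀ i, (∀ j, i < j → ω j < ω i) → ε i = 1)).card := by
          refine Eq.trans ?_ (card_filter_prod
            (P := fun ω : Equiv.Perm (Fin (m+1)) => ω 0 ∈ T)
            (Q := fun (ω : Equiv.Perm (Fin (m+1))) (ε : Fin (m+1) → ℤˣ) =>
              ∀ i, (∀ j, i < j → ω j < ω i) → ε i = 1))
          congr 1
      _ = ∑ ω ∈ univ.filter (fun ω : Equiv.Perm (Fin (m+1)) => ω 0 ∈ T),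
            2 ^ (m + 1 - (rtl ω).card) :=
          Finset.sum_congr rfl (fun ω _ => inner1 ω)
      _ = ∑ v ∈ T, ∑ ω ∈ univ.filter (fun ω : Equiv.Perm (Fin (m+1)) => ω 0 = v),
            2 ^ (m + 1 - (rtl ω).card) := grp T _
      _ = ∑ v ∈ T, (if v = Fin.last m then 1 else 2) * ∏ k ∈ Finset.range m, (2 * k + 1) :=
          Finset.sum_congr rfl (fun v _ => sumG m v)
      _ = (2 * T.card - 1) * ∏ k ∈ Finset.range m, (2 * k + 1) := by
          rw [← Finset.sum_mul, hsumT]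
  · have inner2 : ∀ ω ∈ univ.filter (fun ω : Equiv.Perm (Fin (m+1)) => ω 0 ∉ T),
        (univ.filter (fun ε : Fin (m+1) → ℤˣ =>
            (∏ i, ε i) = 1 ∧ ∀ i, (∀ j, i < j → ω j < ω i) → ε i = 1)).card
          = 2 ^ (m - (rtl ω).card) := by
      intro ω hω
      have hω0 : ω 0 ∉ T := (Finset.mem_filter.mp hω).2
      have hne : ω 0 ≠ Fin.last m := fun h => hω0 (by rw [h]; exact hTlast)
      have h0r : (0 : Fin (m+1)) ∉ rtl ω := zero_not_mem_rtl hne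
      have hset : univ.filter (fun ε : Fin (m+1) → ℤˣ =>
            (∏ i, ε i) = 1 ∧ ∀ i, (∀ j, i < j → ω j < ω i) → ε i = 1)
          = univ.filter (fun ε : Fin (m+1) → ℤˣ =>
            (∏ i, ε i) = 1 ∧ ∀ i ∈ rtl ω, ε i = 1) := by
        ext ε
        simp only [Finset.mem_filter, Finset.mem_univ, true_and, mem_rtl]
      rw [hset]
      have := epsCardB (rtl ω) 0 h0r
      simpa using this
    have hv2 : ∀ v ∈ Tᶜ,
        (∑ ω ∈ univ.filter (fun ω : Equiv.Perm (Fin (m+1)) => ω 0 = v),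
          2 ^ (m - (rtl ω).card)) = ∏ k ∈ Finset.range m, (2 * k + 1) := by
      intro v hv
      have hvlast : v ≠ Fin.last m := fun h => (Finset.mem_compl.mp hv) (by rw [h]; exact hTlast)
      have hdouble : ∀ ω ∈ univ.filter (fun ω : Equiv.Perm (Fin (m+1)) => ω 0 = v),
          2 ^ (m + 1 - (rtl ω).card) = 2 * 2 ^ (m - (rtl ω).card) := by
        intro ω hω
        have hω0 : ω 0 = v := (Finset.mem_filter.mp hω).2
        have h0n : (0 : Fin (m+1)) ∉ rtl ω := zero_not_mem_rtl (by rw [hω0]; exact hvlast)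
        have hsub : rtl ω ⊆ univ.erase 0 := fun i hi =>
          Finset.mem_erase.mpr ⟨fun h => h0n (h ▸ hi), Finset.mem_univ i⟩
        have hc : (rtl ω).card ≤ m := by
          have := Finset.card_le_card hsub
          simpa using this
        have h3 : m + 1 - (rtl ω).card = (m - (rtl ω).card) + 1 := by omega
        rw [h3, pow_succ]; ring
      have h2G := sumG m v
      rw [Finset.sum_congr rfl hdouble, ← Finset.mul_sum, if_neg hvlast] at h2G
      exact Nat.eq_of_mul_eq_mul_left (by norm_num) h2G
    calc ((Finset.univ : Finset (Equiv.Perm (Fin (m+1)) × (Fin (m+1) → ℤˣ))).filter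
        (fun p => (∏ i, p.2 i) = 1 ∧
          p.1 0 ∉ T ∧ p.1 0 ≠ Fin.last m ∧
          ∀ i, (∀ j, i < j → p.1 j < p.1 i) → p.2 i = 1)).card
        = ((Finset.univ : Finset (Equiv.Perm (Fin (m+1)) × (Fin (m+1) → ℤˣ))).filter
            (fun p => p.1 0 ∉ T ∧
              ((∏ i, p.2 i) = 1 ∧ ∀ i, (∀ j, i < j → p.1 j < p.1 i) → p.2 i = 1))).card := by
          congr 1
          ext p
          simp only [Finset.mem_filter, Finset.mem_univ, true_and]
          constructor
          · rintro ⟨h1, h2, h3, h4⟩; exact ⟨h2, h1, h4⟩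
          · rintro ⟨h2, h1, h4⟩
            exact ⟨h1, h2, fun heq => h2 (by rw [heq]; exact hTlast), h4⟩
      _ = ∑ ω ∈ univ.filter (fun ω : Equiv.Perm (Fin (m+1)) => ω 0 ∉ T),
            (univ.filter (fun ε : Fin (m+1) → ℤˣ =>
              (∏ i, ε i) = 1 ∧ ∀ i, (∀ j, i < j → ω j < ω i) → ε i = 1)).card := by
          refine Eq.trans ?_ (card_filter_prod
            (P := fun ω : Equiv.Perm (Fin (m+1)) => ω 0 ∉ T)
            (Q := fun (ω : Equiv.Perm (Fin (m+1))) (ε : Fin (m+1) → ℤˣ) =>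
              (∏ i, ε i) = 1 ∧ ∀ i, (∀ j, i < j → ω j < ω i) → ε i = 1))
          congr 1
      _ = ∑ ω ∈ univ.filter (fun ω : Equiv.Perm (Fin (m+1)) => ω 0 ∉ T),
            2 ^ (m - (rtl ω).card) := Finset.sum_congr rfl inner2
      _ = ∑ ω ∈ univ.filter (fun ω : Equiv.Perm (Fin (m+1)) => ω 0 ∈ Tᶜ),
            2 ^ (m - (rtl ω).card) := by
          congr 1
          ext ω
          simp
      _ = ∑ v ∈ Tᶜ, ∑ ω ∈ univ.filter (fun ω : Equiv.Perm (Fin (m+1)) => ω 0 = v),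
            2 ^ (m - (rtl ω).card) := grp Tᶜ _
      _ = ∑ v ∈ Tᶜ, ∏ k ∈ Finset.range m, (2 * k + 1) := Finset.sum_congr rfl hv2
      _ = (m + 1 - T.card) * ∏ k ∈ Finset.range m, (2 * k + 1) := by
          rw [Finset.sum_const, smul_eq_mul, Finset.card_compl, Fintype.card_fin]
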